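/- For d ≥ 3, the three families of matrix units give mutually orthogonal ideals summing to the identity: Σ_{i,j ∈ {S,A}} G^(0)_{ij} = 1_H − G^(1) − G^(2) (in particular this operator is an idempotent), and for all indices i,j,k,l,p,q ∈ {S,A}: G^(0)_{ij} G^(2)_{kl} = G^(2)_{kl} G^(0)_{ij} = 0, G^(0)_{ij} Ĝ^(1)_{[kl][pq]} = Ĝ^(1)_{[kl][pq]} G^(0)_{ij} = 0, and G^(2)_{ij} Ĝ^(1)_{[kl][pq]} = Ĝ^(1)_{[kl][pq]} G^(2)_{ij} = 0. -/

import Mathlib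

open Matrix Kronecker

namespace WBA

/-- Configurations of `p` qudits of local dimension `d`. -/
abbrev Conf (d p : ℕ) := Fin p → Fin d

/-- Operators on `H = (ℂ^d)^{⊗ 2p}`, indexed by pairs (unprimed configuration, primed
configuration). -/
abbrev Op (d p : ℕ) := Matrix (Conf d p × Conf d p) (Conf d p × Conf d p) ℂ

/-- The projector `P⁺_{a,c'}` onto the maximally entangled state between unprimed system `a`
and primed system `c`, tensored with the identity elsewhere. -/
noncomputable def Pplus (d p : ℕ) (a c : Fin p) : Op d p :=
  Matrix.of fun xy uv =>
    if xy.1 a = xy.2 c ∧ uv.1 a = uv.2 c ∧ (∀ j, j ≠ a → xy.1 j = uv.1 j) ∧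
        (∀ j, j ≠ c → xy.2 j = uv.2 j) then
      (d : ℂ)⁻¹
    else 0

/-- `d • P⁺_{a,c'}`, i.e. the partially transposed swap `V^{t_{c'}}_{(a,c')}`. -/
noncomputable def arc (d p : ℕ) (a c : Fin p) : Op d p := (d : ℂ) • Pplus d p a c

/-- `V^(k) = ∏_{j=p-k+1}^{p} (d • P⁺_{j,j'})` (product over the last `k` systems;
`V^(0) = 1`). -/
noncomputable def Vop (d p k : ℕ) : Op d p :=
  (((List.range p).filter (fun j => decide (p - k ≤ j))).map
    (fun j => if h : j < p then arc d p ⟨j, h⟩ ⟨j, h⟩ else 1)).prod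

/-- `Q^(p) = d^{-p} V^(p)` and `Q^(k) = d^{-k} V^(k) - d^{-(k+1)} V^(k+1)` for `k < p`. -/
noncomputable def Qop (d p k : ℕ) : Op d p :=
  if k = p then ((d : ℂ) ^ p)⁻¹ • Vop d p p
  else ((d : ℂ) ^ k)⁻¹ • Vop d p k - ((d : ℂ) ^ (k + 1))⁻¹ • Vop d p (k + 1)

/-- Permutation matrix on `(ℂ^d)^{⊗ n}`: sends `e_v` to `e_{v ∘ σ⁻¹}`. -/
noncomputable def permMat (d n : ℕ) (σ : Equiv.Perm (Fin n)) :
    Matrix (Fin n → Fin d) (Fin n → Fin d) ℂ :=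
  Matrix.of fun x u => if x = u ∘ ⇑σ⁻¹ then 1 else 0

/-- `V_σ`: permutation of the unprimed factors, identity on the primed factors. -/
noncomputable def VL (d p : ℕ) (σ : Equiv.Perm (Fin p)) : Op d p :=
  (permMat d p σ) ⊗ₖ (1 : Matrix (Conf d p) (Conf d p) ℂ)

/-- `V'_τ`: permutation of the primed factors, identity on the unprimed factors. -/
noncomputable def VR (d p : ℕ) (τ : Equiv.Perm (Fin p)) : Op d p :=
  (1 : Matrix (Conf d p) (Conf d p) ℂ) ⊗ₖ (permMat d p τ)

/-- Identification of `H` with `(ℂ^d)^{⊗ (p+p)}`. -/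
def glue (d p : ℕ) : (Conf d p × Conf d p) ≃ (Fin (p + p) → Fin d) :=
  (Equiv.sumArrowEquivProdArrow (Fin p) (Fin p) (Fin d)).symm.trans
    (Equiv.arrowCongr finSumFinEquiv (Equiv.refl (Fin d)))

/-- The permutation operator `W_π`, `π ∈ S_{2p}`, permuting all `2p` tensor factors of `H`. -/
noncomputable def Wfull (d p : ℕ) (π : Equiv.Perm (Fin (p + p))) : Op d p :=
  (permMat d (p + p) π).submatrix (glue d p) (glue d p)

/-- Partial transpose over the `p` primed factors:
`⟨x,y|M^Γ|u,v⟩ = ⟨x,v|M|u,y⟩`. -/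
noncomputable def ptrans (d p : ℕ) (M : Op d p) : Op d p :=
  Matrix.of fun xy uv => M (xy.1, uv.2) (uv.1, xy.2)

/-- The algebra `A^d_{p,p}` of partially transposed permutation operators, as a
linear subspace of `End(H)`. -/
noncomputable def Apt (d p : ℕ) : Submodule ℂ (Op d p) :=
  Submodule.span ℂ {M | ∃ π : Equiv.Perm (Fin (p + p)), M = ptrans d p (Wfull d p π)}

/-- Extension of an operator on systems `1,…,p-r,1',…,(p-r)'` by the identity on the
remaining systems. -/
noncomputable def embed (d p r : ℕ) (M : Op d (p - r)) : Op d p :=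
  Matrix.of fun xy uv =>
    M (xy.1 ∘ Fin.castLE (Nat.sub_le p r), xy.2 ∘ Fin.castLE (Nat.sub_le p r))
      (uv.1 ∘ Fin.castLE (Nat.sub_le p r), uv.2 ∘ Fin.castLE (Nat.sub_le p r)) *
    (if ∀ j : Fin p, p - r ≤ (j : ℕ) → xy.1 j = uv.1 j ∧ xy.2 j = uv.2 j then 1 else 0)

/-- The ideal `M̃^(k) = span{ V_σ V'_τ Q^(k) V_π V'_ρ }` of `A^d_{p,p}`. -/
noncomputable def Mtil (d p k : ℕ) : Submodule ℂ (Op d p) :=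
  Submodule.span ℂ {M | ∃ σ τ π ρ : Equiv.Perm (Fin p),
    M = VL d p σ * VR d p τ * Qop d p k * (VL d p π * VR d p ρ)}

/-- Labels for the two irreps of `S_2`: symmetric `S` and antisymmetric `A`. -/
inductive SA
  | S
  | A
deriving DecidableEq

instance instFintypeSA : Fintype SA :=
  ⟨{SA.S, SA.A}, fun x => by cases x <;> simp⟩

/-- The swap operator on `ℂ^d ⊗ ℂ^d`. -/
noncomputable def Fsw (d : ℕ) : Matrix (Conf d 2) (Conf d 2) ℂ :=
  Matrix.of fun x u => if x 0 = u 1 ∧ x 1 = u 0 then 1 else 0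

/-- Symmetric and antisymmetric projectors on `ℂ^d ⊗ ℂ^d`. -/
noncomputable def Esm (d : ℕ) : SA → Matrix (Conf d 2) (Conf d 2) ℂ
  | SA.S => (2 : ℂ)⁻¹ • (1 + Fsw d)
  | SA.A => (2 : ℂ)⁻¹ • (1 - Fsw d)

/-- `E_i ⊗ E_j` on `H = (ℂ^d)^{⊗4}`. -/
noncomputable def EE (d : ℕ) (i j : SA) : Op d 2 := (Esm d i) ⊗ₖ (Esm d j)

/-- `E_i ⊗ 1` on `H = (ℂ^d)^{⊗4}`. -/
noncomputable def EId (d : ℕ) (i : SA) : Op d 2 :=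
  (Esm d i) ⊗ₖ (1 : Matrix (Conf d 2) (Conf d 2) ℂ)

/-- Multiplicities `m_S = d(d+1)/2`, `m_A = d(d-1)/2` (real valued). -/
noncomputable def mR (d : ℕ) : SA → ℝ
  | SA.S => (d : ℝ) * ((d : ℝ) + 1) / 2
  | SA.A => (d : ℝ) * ((d : ℝ) - 1) / 2

/-- Multiplicities `m_S = d(d+1)/2`, `m_A = d(d-1)/2` (complex valued). -/
noncomputable def mC (d : ℕ) : SA → ℂ
  | SA.S => (d : ℂ) * ((d : ℂ) + 1) / 2
  | SA.A => (d : ℂ) * ((d : ℂ) - 1) / 2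

/-- `V^(1) = d • P⁺_{2,2'}` for `p = 2`. -/
noncomputable def V1 (d : ℕ) : Op d 2 := arc d 2 1 1

/-- `V^(2) = d² • P⁺_{2,2'} P⁺_{1,1'}` for `p = 2`. -/
noncomputable def V2 (d : ℕ) : Op d 2 := arc d 2 1 1 * arc d 2 0 0

/-- `Q^(2) = d^{-2} V^(2)` for `p = 2`. -/
noncomputable def Q2 (d : ℕ) : Op d 2 := ((d : ℂ) ^ 2)⁻¹ • V2 d

/-- `Q^(1) = d^{-1} V^(1) - d^{-2} V^(2)` for `p = 2`. -/
noncomputable def Q1 (d : ℕ) : Op d 2 :=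
  (d : ℂ)⁻¹ • V1 d - ((d : ℂ) ^ 2)⁻¹ • V2 d

/-- `G^(2)_{kl} = (d²/√(m_k m_l)) (E_k ⊗ 1) Q^(2) (E_l ⊗ 1)`. -/
noncomputable def G2 (d : ℕ) (k l : SA) : Op d 2 :=
  ((d : ℂ) ^ 2 / ((Real.sqrt (mR d k * mR d l) : ℝ) : ℂ)) • (EId d k * Q2 d * EId d l)

/-- `G^(2) = G^(2)_{SS} + G^(2)_{AA}`. -/
noncomputable def G2sum (d : ℕ) : Op d 2 := G2 d SA.S SA.S + G2 d SA.A SA.A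

/-- The Gram coefficients `b_{SS} = (d+2)/(4d)`, `b_{SA} = b_{AS} = 1/4`,
`b_{AA} = (d-2)/(4d)`. -/
noncomputable def bc (d : ℕ) : SA → SA → ℂ
  | SA.S, SA.S => ((d : ℂ) + 2) / (4 * (d : ℂ))
  | SA.S, SA.A => 1 / 4
  | SA.A, SA.S => 1 / 4
  | SA.A, SA.A => ((d : ℂ) - 2) / (4 * (d : ℂ))

/-- `Ĝ^(1)_{[ij][kl]} = (E_i ⊗ E_j) Q^(1) (E_k ⊗ E_l)`. -/
noncomputable def Ghat1 (d : ℕ) (i j k l : SA) : Op d 2 :=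
  EE d i j * Q1 d * EE d k l

/-- `G^(1)_{[ij][kl]} = b_{ij}⁻¹ Ĝ^(1)_{[ij][kl]}`. -/
noncomputable def G1 (d : ℕ) (i j k l : SA) : Op d 2 := (bc d i j)⁻¹ • Ghat1 d i j k l

/-- `G^(1) = Σ_{ij} G^(1)_{[ij][ij]}`. -/
noncomputable def G1sum (d : ℕ) : Op d 2 := ∑ i : SA, ∑ j : SA, G1 d i j i j

/-- `G^(0)_{ij} = E_i⊗E_j - b_{ij}⁻¹ (E_i⊗E_j)Q^(1)(E_i⊗E_j)
- δ_{ij} (d²/m_i) (E_i⊗1)Q^(2)(E_i⊗1)`. -/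
noncomputable def G0 (d : ℕ) (i j : SA) : Op d 2 :=
  EE d i j - (bc d i j)⁻¹ • (EE d i j * Q1 d * EE d i j) -
    (if i = j then (d : ℂ) ^ 2 / mC d i else 0) • (EId d i * Q2 d * EId d i)



-- === Section A: closed forms and action lemmas ===
noncomputable def V1c (d : ℕ) : Op d 2 := Matrix.of fun p q =>
  if p.1 1 = p.2 1 ∧ q.1 1 = q.2 1 ∧ p.1 0 = q.1 0 ∧ p.2 0 = q.2 0 then 1 else 0

noncomputable def V0c (d : ℕ) : Op d 2 := Matrix.of fun p q =>
  if p.1 0 = p.2 0 ∧ q.1 0 = q.2 0 ∧ p.1 1 = q.1 1 ∧ p.2 1 = q.2 1 then 1 else 0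

noncomputable def V2c (d : ℕ) : Op d 2 := Matrix.of fun p q =>
  if p.1 0 = p.2 0 ∧ p.1 1 = p.2 1 ∧ q.1 0 = q.2 0 ∧ q.1 1 = q.2 1 then 1 else 0

noncomputable def AAm (d : ℕ) : Op d 2 := (Fsw d) ⊗ₖ (1 : Matrix (Conf d 2) (Conf d 2) ℂ)
noncomputable def BBm (d : ℕ) : Op d 2 := (1 : Matrix (Conf d 2) (Conf d 2) ℂ) ⊗ₖ (Fsw d)

def swL {d : ℕ} (p : Conf d 2 × Conf d 2) : Conf d 2 × Conf d 2 := (![p.1 1, p.1 0], p.2)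
def swR {d : ℕ} (p : Conf d 2 × Conf d 2) : Conf d 2 × Conf d 2 := (p.1, ![p.2 1, p.2 0])

lemma sum_conf2 {d : ℕ} (f : (Fin 2 → Fin d) → ℂ) :
    ∑ z, f z = ∑ a : Fin d, ∑ b : Fin d, f ![a, b] := by
  rw [← Equiv.sum_comp (finTwoArrowEquiv (Fin d)).symm f, Fintype.sum_prod_type]
  rfl

lemma vec_eta {d : ℕ} (x : Conf d 2) : ![x 0, x 1] = x := by
  funext j; fin_cases j <;> rfl

lemma eq_swL_iff {d : ℕ} (p q : Conf d 2 × Conf d 2) :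
    q = swL p ↔ (q.1 0 = p.1 1 ∧ q.1 1 = p.1 0 ∧ q.2 = p.2) := by
  constructor
  · rintro rfl; exact ⟨rfl, rfl, rfl⟩
  · rintro ⟨h1, h2, h3⟩
    rw [swL, Prod.ext_iff]
    refine ⟨?_, h3⟩
    funext j; fin_cases j
    · exact h1
    · exact h2

lemma eq_swR_iff {d : ℕ} (p q : Conf d 2 × Conf d 2) :
    q = swR p ↔ (q.1 = p.1 ∧ q.2 0 = p.2 1 ∧ q.2 1 = p.2 0) := by
  constructor
  · rintro rfl; exact ⟨rfl, rfl, rfl⟩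
  · rintro ⟨h1, h2, h3⟩
    rw [swR, Prod.ext_iff]
    refine ⟨h1, ?_⟩
    funext j; fin_cases j
    · exact h2
    · exact h3

lemma swL_swL {d : ℕ} (p : Conf d 2 × Conf d 2) : swL (swL p) = p := by
  obtain ⟨x, y⟩ := p
  simp [swL, vec_eta]

lemma swR_swR {d : ℕ} (p : Conf d 2 × Conf d 2) : swR (swR p) = p := by
  obtain ⟨x, y⟩ := p
  simp [swR, vec_eta]

lemma AA_apply {d : ℕ} (p q : Conf d 2 × Conf d 2) :
    AAm d p q = if q = swL p then 1 else 0 := by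
  obtain ⟨x, y⟩ := p; obtain ⟨u, v⟩ := q
  simp only [AAm, kroneckerMap_apply, Fsw, of_apply, one_apply, ite_mul, one_mul,
    zero_mul, ← ite_and]
  refine if_congr ?_ rfl rfl
  rw [eq_swL_iff]
  constructor
  · rintro ⟨⟨h1, h2⟩, h3⟩; exact ⟨h2.symm, h1.symm, h3.symm⟩
  · rintro ⟨h1, h2, h3⟩; exact ⟨⟨h2.symm, h1.symm⟩, h3.symm⟩

lemma BB_apply {d : ℕ} (p q : Conf d 2 × Conf d 2) :
    BBm d p q = if q = swR p then 1 else 0 := by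
  obtain ⟨x, y⟩ := p; obtain ⟨u, v⟩ := q
  simp only [BBm, kroneckerMap_apply, Fsw, of_apply, one_apply, ite_mul, one_mul,
    zero_mul, ← ite_and]
  refine if_congr ?_ rfl rfl
  rw [eq_swR_iff]
  constructor
  · rintro ⟨h1, h2, h3⟩; exact ⟨h1.symm, h3.symm, h2.symm⟩
  · rintro ⟨h1, h2, h3⟩; exact ⟨h1.symm, h3.symm, h2.symm⟩

lemma AA_apply' {d : ℕ} (p q : Conf d 2 × Conf d 2) :
    AAm d p q = if p = swL q then 1 else 0 := by
  rw [AA_apply]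
  refine if_congr ?_ rfl rfl
  constructor
  · intro h; rw [h, swL_swL]
  · intro h; rw [h, swL_swL]

lemma BB_apply' {d : ℕ} (p q : Conf d 2 × Conf d 2) :
    BBm d p q = if p = swR q then 1 else 0 := by
  rw [BB_apply]
  refine if_congr ?_ rfl rfl
  constructor
  · intro h; rw [h, swR_swR]
  · intro h; rw [h, swR_swR]

lemma mul_AA {d : ℕ} (M : Op d 2) : M * AAm d = M.submatrix id swL := by
  ext p q
  rw [mul_apply]
  simp only [AA_apply']
  simp [mul_ite, mul_one, mul_zero, Finset.sum_ite_eq', Finset.mem_univ]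

lemma mul_BB {d : ℕ} (M : Op d 2) : M * BBm d = M.submatrix id swR := by
  ext p q
  rw [mul_apply]
  simp only [BB_apply']
  simp [mul_ite, mul_one, mul_zero, Finset.sum_ite_eq', Finset.mem_univ]

lemma AA_mul {d : ℕ} (M : Op d 2) : AAm d * M = M.submatrix swL id := by
  ext p q
  rw [mul_apply]
  simp only [AA_apply]
  simp [ite_mul, one_mul, zero_mul, Finset.sum_ite_eq, Finset.mem_univ]

lemma BB_mul {d : ℕ} (M : Op d 2) : BBm d * M = M.submatrix swR id := by
  ext p q
  rw [mul_apply]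
  simp only [BB_apply]
  simp [ite_mul, one_mul, zero_mul, Finset.sum_ite_eq, Finset.mem_univ]

lemma hFF (d : ℕ) : Fsw d * Fsw d = 1 := by
  ext x u
  rw [mul_apply]
  simp only [sum_conf2, Fsw, of_apply, Matrix.cons_val_zero, Matrix.cons_val_one,
    Matrix.head_cons, ite_mul, zero_mul, one_mul, ← ite_and]
  have key : ∀ a b : Fin d,
      ((x 0 = b ∧ x 1 = a) ∧ (a = u 1 ∧ b = u 0)) ↔
      (b = x 0 ∧ (a = x 1 ∧ (x 0 = u 0 ∧ x 1 = u 1))) := by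
    intro a b
    constructor <;> intro h <;> (try simp_all) <;> grind
  simp only [key]
  simp only [ite_and, Finset.sum_ite_eq', Finset.mem_univ, if_true]
  rw [← ite_and, one_apply]
  refine if_congr ?_ rfl rfl
  exact (funext_iff.trans Fin.forall_fin_two).symm

lemma hV1V1 (d : ℕ) : V1c d * V1c d = (d : ℂ) • V1c d := by
  ext ⟨x, y⟩ ⟨u, v⟩
  rw [mul_apply, Fintype.sum_prod_type]
  simp only [sum_conf2, V1c, V0c, V2c, Matrix.submatrix_apply, id_eq, swL, swR, of_apply,
    Matrix.cons_val_zero, Matrix.cons_val_one, Matrix.head_cons, ite_mul, zero_mul,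
    one_mul, Matrix.smul_apply, smul_eq_mul, ← ite_and]
  have key : ∀ a b c e : Fin d,
      ((x 1 = y 1 ∧ b = e ∧ x 0 = a ∧ y 0 = c) ∧ (b = e ∧ u 1 = v 1 ∧ a = u 0 ∧ c = v 0)) ↔ (e = b ∧ (c = y 0 ∧ (a = x 0 ∧ (x 1 = y 1 ∧ u 1 = v 1 ∧ x 0 = u 0 ∧ y 0 = v 0)))) := by
    intro a b c e
    constructor <;> intro h <;> (try simp_all) <;> grind
  simp only [key]
  simp only [ite_and, Finset.sum_ite_eq', Finset.mem_univ, if_true,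
    Finset.sum_const, Finset.card_univ, Fintype.card_fin, nsmul_eq_mul]
  try simp only [← Finset.mul_sum, Finset.sum_ite_eq', Finset.mem_univ, if_true]

lemma hV1V0 (d : ℕ) : V1c d * V0c d = V2c d := by
  ext ⟨x, y⟩ ⟨u, v⟩
  rw [mul_apply, Fintype.sum_prod_type]
  simp only [sum_conf2, V1c, V0c, V2c, Matrix.submatrix_apply, id_eq, swL, swR, of_apply,
    Matrix.cons_val_zero, Matrix.cons_val_one, Matrix.head_cons, ite_mul, zero_mul,
    one_mul, Matrix.smul_apply, smul_eq_mul, ← ite_and]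
  have key : ∀ a b c e : Fin d,
      ((x 1 = y 1 ∧ b = e ∧ x 0 = a ∧ y 0 = c) ∧ (a = c ∧ u 0 = v 0 ∧ b = u 1 ∧ e = v 1)) ↔ (e = b ∧ (c = y 0 ∧ (b = u 1 ∧ (a = x 0 ∧ (x 0 = y 0 ∧ x 1 = y 1 ∧ u 0 = v 0 ∧ u 1 = v 1))))) := by
    intro a b c e
    constructor <;> intro h <;> (try simp_all) <;> grind
  simp only [key]
  simp only [ite_and, Finset.sum_ite_eq', Finset.mem_univ, if_true,
    Finset.sum_const, Finset.card_univ, Fintype.card_fin, nsmul_eq_mul]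

lemma hV1V2 (d : ℕ) : V1c d * V2c d = (d : ℂ) • V2c d := by
  ext ⟨x, y⟩ ⟨u, v⟩
  rw [mul_apply, Fintype.sum_prod_type]
  simp only [sum_conf2, V1c, V0c, V2c, Matrix.submatrix_apply, id_eq, swL, swR, of_apply,
    Matrix.cons_val_zero, Matrix.cons_val_one, Matrix.head_cons, ite_mul, zero_mul,
    one_mul, Matrix.smul_apply, smul_eq_mul, ← ite_and]
  have key : ∀ a b c e : Fin d,
      ((x 1 = y 1 ∧ b = e ∧ x 0 = a ∧ y 0 = c) ∧ (a = c ∧ b = e ∧ u 0 = v 0 ∧ u 1 = v 1)) ↔ (e = b ∧ (c = y 0 ∧ (a = x 0 ∧ (x 0 = y 0 ∧ x 1 = y 1 ∧ u 0 = v 0 ∧ u 1 = v 1)))) := by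
    intro a b c e
    constructor <;> intro h <;> (try simp_all) <;> grind
  simp only [key]
  simp only [ite_and, Finset.sum_ite_eq', Finset.mem_univ, if_true,
    Finset.sum_const, Finset.card_univ, Fintype.card_fin, nsmul_eq_mul]
  try simp only [← Finset.mul_sum, Finset.sum_ite_eq', Finset.mem_univ, if_true]

lemma hV2V2 (d : ℕ) : V2c d * V2c d = ((d : ℂ) * (d : ℂ)) • V2c d := by
  ext ⟨x, y⟩ ⟨u, v⟩
  rw [mul_apply, Fintype.sum_prod_type]
  simp only [sum_conf2, V1c, V0c, V2c, Matrix.submatrix_apply, id_eq, swL, swR, of_apply,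
    Matrix.cons_val_zero, Matrix.cons_val_one, Matrix.head_cons, ite_mul, zero_mul,
    one_mul, Matrix.smul_apply, smul_eq_mul, ← ite_and]
  have key : ∀ a b c e : Fin d,
      ((x 0 = y 0 ∧ x 1 = y 1 ∧ a = c ∧ b = e) ∧ (a = c ∧ b = e ∧ u 0 = v 0 ∧ u 1 = v 1)) ↔ (e = b ∧ (c = a ∧ (x 0 = y 0 ∧ x 1 = y 1 ∧ u 0 = v 0 ∧ u 1 = v 1))) := by
    intro a b c e
    constructor <;> intro h <;> (try simp_all) <;> grind
  simp only [key]
  simp only [ite_and, Finset.sum_ite_eq', Finset.mem_univ, if_true,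
    Finset.sum_const, Finset.card_univ, Fintype.card_fin, nsmul_eq_mul]
  ring

lemma V1c_swL (d : ℕ) : (V1c d).submatrix id swL = Matrix.of fun p q =>
    if p.1 1 = p.2 1 ∧ q.1 0 = q.2 1 ∧ p.1 0 = q.1 1 ∧ p.2 0 = q.2 0 then (1 : ℂ) else 0 := by
  ext p q; rfl

lemma V1c_swR (d : ℕ) : (V1c d).submatrix id swR = Matrix.of fun p q =>
    if p.1 1 = p.2 1 ∧ q.1 1 = q.2 0 ∧ p.1 0 = q.1 0 ∧ p.2 0 = q.2 1 then (1 : ℂ) else 0 := by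
  ext p q; rfl

lemma V1c_swLR (d : ℕ) : ((V1c d).submatrix id swL).submatrix id swR = Matrix.of fun p q =>
    if p.1 1 = p.2 1 ∧ q.1 0 = q.2 0 ∧ p.1 0 = q.1 1 ∧ p.2 0 = q.2 1 then (1 : ℂ) else 0 := by
  ext p q; rfl

lemma V2c_swL (d : ℕ) : (V2c d).submatrix id swL = Matrix.of fun p q =>
    if p.1 0 = p.2 0 ∧ p.1 1 = p.2 1 ∧ q.1 1 = q.2 0 ∧ q.1 0 = q.2 1 then (1 : ℂ) else 0 := by
  ext p q; rfl

lemma hV1AV1 (d : ℕ) : V1c d * AAm d * V1c d = V1c d := by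
  rw [mul_AA, V1c_swL]
  ext ⟨x, y⟩ ⟨u, v⟩
  rw [mul_apply, Fintype.sum_prod_type]
  simp only [sum_conf2, V1c, V0c, V2c, Matrix.submatrix_apply, id_eq, swL, swR, of_apply,
    Matrix.cons_val_zero, Matrix.cons_val_one, Matrix.head_cons, ite_mul, zero_mul,
    one_mul, Matrix.smul_apply, smul_eq_mul, ← ite_and]
  have key : ∀ a b c e : Fin d,
      ((x 1 = y 1 ∧ a = e ∧ x 0 = b ∧ y 0 = c) ∧ (b = e ∧ u 1 = v 1 ∧ a = u 0 ∧ c = v 0)) ↔ (e = b ∧ (c = y 0 ∧ (b = x 0 ∧ (a = x 0 ∧ (x 1 = y 1 ∧ u 1 = v 1 ∧ x 0 = u 0 ∧ y 0 = v 0))))) := by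
    intro a b c e
    constructor <;> intro h <;> (try simp_all) <;> grind
  simp only [key]
  simp only [ite_and, Finset.sum_ite_eq', Finset.mem_univ, if_true,
    Finset.sum_const, Finset.card_univ, Fintype.card_fin, nsmul_eq_mul]

lemma hV1BV1 (d : ℕ) : V1c d * BBm d * V1c d = V1c d := by
  rw [mul_BB, V1c_swR]
  ext ⟨x, y⟩ ⟨u, v⟩
  rw [mul_apply, Fintype.sum_prod_type]
  simp only [sum_conf2, V1c, V0c, V2c, Matrix.submatrix_apply, id_eq, swL, swR, of_apply,
    Matrix.cons_val_zero, Matrix.cons_val_one, Matrix.head_cons, ite_mul, zero_mul,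
    one_mul, Matrix.smul_apply, smul_eq_mul, ← ite_and]
  have key : ∀ a b c e : Fin d,
      ((x 1 = y 1 ∧ b = c ∧ x 0 = a ∧ y 0 = e) ∧ (b = e ∧ u 1 = v 1 ∧ a = u 0 ∧ c = v 0)) ↔ (e = y 0 ∧ (c = b ∧ (b = y 0 ∧ (a = x 0 ∧ (x 1 = y 1 ∧ u 1 = v 1 ∧ x 0 = u 0 ∧ y 0 = v 0))))) := by
    intro a b c e
    constructor <;> intro h <;> (try simp_all) <;> grind
  simp only [key]
  simp only [ite_and, Finset.sum_ite_eq', Finset.mem_univ, if_true,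
    Finset.sum_const, Finset.card_univ, Fintype.card_fin, nsmul_eq_mul]

lemma hV1ABV1 (d : ℕ) : V1c d * (AAm d * BBm d) * V1c d = V2c d := by
  rw [← mul_assoc, mul_AA, mul_BB, V1c_swLR]
  ext ⟨x, y⟩ ⟨u, v⟩
  rw [mul_apply, Fintype.sum_prod_type]
  simp only [sum_conf2, V1c, V0c, V2c, Matrix.submatrix_apply, id_eq, swL, swR, of_apply,
    Matrix.cons_val_zero, Matrix.cons_val_one, Matrix.head_cons, ite_mul, zero_mul,
    one_mul, Matrix.smul_apply, smul_eq_mul, ← ite_and]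
  have key : ∀ a b c e : Fin d,
      ((x 1 = y 1 ∧ a = c ∧ x 0 = b ∧ y 0 = e) ∧ (b = e ∧ u 1 = v 1 ∧ a = u 0 ∧ c = v 0)) ↔ (e = y 0 ∧ (c = a ∧ (b = x 0 ∧ (a = u 0 ∧ (x 0 = y 0 ∧ x 1 = y 1 ∧ u 0 = v 0 ∧ u 1 = v 1))))) := by
    intro a b c e
    constructor <;> intro h <;> (try simp_all) <;> grind
  simp only [key]
  simp only [ite_and, Finset.sum_ite_eq', Finset.mem_univ, if_true,
    Finset.sum_const, Finset.card_univ, Fintype.card_fin, nsmul_eq_mul]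

lemma hV1AV2 (d : ℕ) : V1c d * AAm d * V2c d = V2c d := by
  rw [mul_AA, V1c_swL]
  ext ⟨x, y⟩ ⟨u, v⟩
  rw [mul_apply, Fintype.sum_prod_type]
  simp only [sum_conf2, V1c, V0c, V2c, Matrix.submatrix_apply, id_eq, swL, swR, of_apply,
    Matrix.cons_val_zero, Matrix.cons_val_one, Matrix.head_cons, ite_mul, zero_mul,
    one_mul, Matrix.smul_apply, smul_eq_mul, ← ite_and]
  have key : ∀ a b c e : Fin d,
      ((x 1 = y 1 ∧ a = e ∧ x 0 = b ∧ y 0 = c) ∧ (a = c ∧ b = e ∧ u 0 = v 0 ∧ u 1 = v 1)) ↔ (e = b ∧ (c = y 0 ∧ (b = x 0 ∧ (a = x 0 ∧ (x 0 = y 0 ∧ x 1 = y 1 ∧ u 0 = v 0 ∧ u 1 = v 1))))) := by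
    intro a b c e
    constructor <;> intro h <;> (try simp_all) <;> grind
  simp only [key]
  simp only [ite_and, Finset.sum_ite_eq', Finset.mem_univ, if_true,
    Finset.sum_const, Finset.card_univ, Fintype.card_fin, nsmul_eq_mul]

lemma hV2AV2 (d : ℕ) : V2c d * AAm d * V2c d = (d : ℂ) • V2c d := by
  rw [mul_AA, V2c_swL]
  ext ⟨x, y⟩ ⟨u, v⟩
  rw [mul_apply, Fintype.sum_prod_type]
  simp only [sum_conf2, V1c, V0c, V2c, Matrix.submatrix_apply, id_eq, swL, swR, of_apply,
    Matrix.cons_val_zero, Matrix.cons_val_one, Matrix.head_cons, ite_mul, zero_mul,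
    one_mul, Matrix.smul_apply, smul_eq_mul, ← ite_and]
  have key : ∀ a b c e : Fin d,
      ((x 0 = y 0 ∧ x 1 = y 1 ∧ b = c ∧ a = e) ∧ (a = c ∧ b = e ∧ u 0 = v 0 ∧ u 1 = v 1)) ↔ (e = a ∧ (c = a ∧ (b = a ∧ (x 0 = y 0 ∧ x 1 = y 1 ∧ u 0 = v 0 ∧ u 1 = v 1)))) := by
    intro a b c e
    constructor <;> intro h <;> (try simp_all) <;> grind
  simp only [key]
  simp only [ite_and, Finset.sum_ite_eq', Finset.mem_univ, if_true,
    Finset.sum_const, Finset.card_univ, Fintype.card_fin, nsmul_eq_mul]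
  try simp only [← Finset.mul_sum, Finset.sum_ite_eq', Finset.mem_univ, if_true]

lemma tV1 (d : ℕ) : (V1c d)ᵀ = V1c d := by
  ext p q
  rw [transpose_apply]
  unfold V1c
  rw [of_apply, of_apply]
  refine if_congr ?_ rfl rfl
  constructor
  · rintro ⟨h1, h2, h3, h4⟩; exact ⟨h2, h1, h3.symm, h4.symm⟩
  · rintro ⟨h1, h2, h3, h4⟩; exact ⟨h2, h1, h3.symm, h4.symm⟩

lemma tV2 (d : ℕ) : (V2c d)ᵀ = V2c d := by
  ext p q
  rw [transpose_apply]
  unfold V2c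
  rw [of_apply, of_apply]
  refine if_congr ?_ rfl rfl
  constructor
  · rintro ⟨h1, h2, h3, h4⟩; exact ⟨h3, h4, h1, h2⟩
  · rintro ⟨h1, h2, h3, h4⟩; exact ⟨h3, h4, h1, h2⟩

lemma tAA (d : ℕ) : (AAm d)ᵀ = AAm d := by
  ext p q
  rw [transpose_apply, AA_apply' q p, AA_apply p q]

lemma tBB (d : ℕ) : (BBm d)ᵀ = BBm d := by
  ext p q
  rw [transpose_apply, BB_apply' q p, BB_apply p q]

lemma AV2 (d : ℕ) : AAm d * V2c d = BBm d * V2c d := by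
  rw [AA_mul, BB_mul]
  ext p q
  simp only [submatrix_apply, id_eq, V2c, of_apply, swL, swR, Matrix.cons_val_zero,
    Matrix.cons_val_one, Matrix.head_cons]
  refine if_congr ?_ rfl rfl
  constructor
  · rintro ⟨h1, h2, h3, h4⟩; exact ⟨h2, h1, h3, h4⟩
  · rintro ⟨h1, h2, h3, h4⟩; exact ⟨h2, h1, h3, h4⟩

lemma V2A (d : ℕ) : V2c d * AAm d = V2c d * BBm d := by
  have h := congrArg Matrix.transpose (AV2 d)
  rw [transpose_mul, transpose_mul, tV2, tAA, tBB] at h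
  exact h

lemma AAAA (d : ℕ) : AAm d * AAm d = 1 := by
  unfold AAm
  rw [← Matrix.mul_kronecker_mul, hFF, Matrix.mul_one, Matrix.one_kronecker_one]

lemma BBBB (d : ℕ) : BBm d * BBm d = 1 := by
  unfold BBm
  rw [← Matrix.mul_kronecker_mul, hFF, Matrix.mul_one, Matrix.one_kronecker_one]

lemma ABBA (d : ℕ) : AAm d * BBm d = BBm d * AAm d := by
  simp only [AAm, BBm, ← Matrix.mul_kronecker_mul, Matrix.mul_one, Matrix.one_mul]

lemma cV2V1 (d : ℕ) : V2c d * V1c d = (d : ℂ) • V2c d := by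
  have h := congrArg Matrix.transpose (hV1V2 d)
  rw [transpose_mul, transpose_smul, tV1, tV2] at h
  exact h

lemma cV2AV1 (d : ℕ) : V2c d * AAm d * V1c d = V2c d := by
  have h := congrArg Matrix.transpose (hV1AV2 d)
  rw [transpose_mul, transpose_mul, tV1, tV2, tAA] at h
  rw [mul_assoc]
  exact h

lemma cV1BV2 (d : ℕ) : V1c d * BBm d * V2c d = V2c d := by
  rw [mul_assoc, ← AV2, ← mul_assoc, hV1AV2]

lemma cV2BV1 (d : ℕ) : V2c d * BBm d * V1c d = V2c d := by
  rw [← V2A, cV2AV1]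

lemma cV1ABV2 (d : ℕ) : V1c d * (AAm d * BBm d) * V2c d = (d : ℂ) • V2c d := by
  rw [mul_assoc, mul_assoc, ← AV2, ← mul_assoc, ← mul_assoc, mul_assoc (V1c d) (AAm d) (AAm d), AAAA,
    mul_one, hV1V2]

lemma cV2ABV1 (d : ℕ) : V2c d * (AAm d * BBm d) * V1c d = (d : ℂ) • V2c d := by
  rw [← mul_assoc (V2c d) (AAm d) (BBm d), V2A, mul_assoc (V2c d) (BBm d) (BBm d), BBBB,
    mul_one, cV2V1]

lemma cV2BV2 (d : ℕ) : V2c d * BBm d * V2c d = (d : ℂ) • V2c d := by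
  rw [mul_assoc, ← AV2, ← mul_assoc, hV2AV2]

lemma cV2ABV2 (d : ℕ) : V2c d * (AAm d * BBm d) * V2c d = ((d : ℂ) * (d : ℂ)) • V2c d := by
  rw [mul_assoc, mul_assoc, ← AV2, ← mul_assoc, ← mul_assoc, mul_assoc (V2c d) (AAm d) (AAm d), AAAA,
    mul_one, hV2V2]

lemma hd0 {d : ℕ} (hd : 3 ≤ d) : (d : ℂ) ≠ 0 := Nat.cast_ne_zero.mpr (by omega)

def sg : SA → ℂ
  | SA.S => 1
  | SA.A => -1

lemma sumSA {M : Type*} [AddCommMonoid M] (f : SA → M) :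
    ∑ i : SA, f i = f SA.S + f SA.A := by
  have h : (Finset.univ : Finset SA) = {SA.S, SA.A} := rfl
  rw [h, Finset.sum_insert (by decide), Finset.sum_singleton]

lemma arc11_eq {d : ℕ} (hd : (d : ℂ) ≠ 0) : arc d 2 1 1 = V1c d := by
  ext ⟨x, y⟩ ⟨u, v⟩
  have hf : ∀ f g : Conf d 2, (∀ j, j ≠ (1 : Fin 2) → f j = g j) ↔ f 0 = g 0 := by
    intro f g
    constructor
    · intro h; exact h 0 (by decide)
    · intro h j hj
      fin_cases j
      · simpa using h
      · simp at hj
  simp only [arc, Pplus, Matrix.smul_apply, of_apply, smul_eq_mul, V1c, hf]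
  rw [mul_ite, mul_inv_cancel₀ hd, mul_zero]

lemma arc00_eq {d : ℕ} (hd : (d : ℂ) ≠ 0) : arc d 2 0 0 = V0c d := by
  ext ⟨x, y⟩ ⟨u, v⟩
  have hf : ∀ f g : Conf d 2, (∀ j, j ≠ (0 : Fin 2) → f j = g j) ↔ f 1 = g 1 := by
    intro f g
    constructor
    · intro h; exact h 1 (by decide)
    · intro h j hj
      fin_cases j
      · simp at hj
      · simpa using h
  simp only [arc, Pplus, Matrix.smul_apply, of_apply, smul_eq_mul, V0c, hf]
  rw [mul_ite, mul_inv_cancel₀ hd, mul_zero]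

lemma V1_eq {d : ℕ} (hd : (d : ℂ) ≠ 0) : V1 d = V1c d := arc11_eq hd

lemma V2_eq {d : ℕ} (hd : (d : ℂ) ≠ 0) : V2 d = V2c d := by
  rw [show V2 d = arc d 2 1 1 * arc d 2 0 0 from rfl, arc11_eq hd, arc00_eq hd, hV1V0]

lemma Q2_eq {d : ℕ} (hd : (d : ℂ) ≠ 0) : Q2 d = ((d : ℂ) ^ 2)⁻¹ • V2c d := by
  rw [show Q2 d = ((d : ℂ) ^ 2)⁻¹ • V2 d from rfl, V2_eq hd]

lemma Q1_eq {d : ℕ} (hd : (d : ℂ) ≠ 0) :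
    Q1 d = (d : ℂ)⁻¹ • V1c d - ((d : ℂ) ^ 2)⁻¹ • V2c d := by
  rw [show Q1 d = (d : ℂ)⁻¹ • V1 d - ((d : ℂ) ^ 2)⁻¹ • V2 d from rfl, V1_eq hd, V2_eq hd]

noncomputable def SRm (d : ℕ) (j : SA) : Op d 2 :=
  (1 : Matrix (Conf d 2) (Conf d 2) ℂ) ⊗ₖ Esm d j

lemma Esm_eq (d : ℕ) (i : SA) : Esm d i = (2 : ℂ)⁻¹ • (1 + sg i • Fsw d) := by
  cases i <;> simp [Esm, sg, sub_eq_add_neg]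

lemma EId_eq (d : ℕ) (i : SA) : EId d i = (2 : ℂ)⁻¹ • (1 + sg i • AAm d) := by
  rw [show EId d i = Esm d i ⊗ₖ (1 : Matrix (Conf d 2) (Conf d 2) ℂ) from rfl, Esm_eq,
    Matrix.smul_kronecker, Matrix.add_kronecker, Matrix.smul_kronecker,
    Matrix.one_kronecker_one]
  rfl

lemma SR_eq (d : ℕ) (j : SA) : SRm d j = (2 : ℂ)⁻¹ • (1 + sg j • BBm d) := by
  rw [show SRm d j = (1 : Matrix (Conf d 2) (Conf d 2) ℂ) ⊗ₖ Esm d j from rfl, Esm_eq,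
    Matrix.kronecker_smul, Matrix.kronecker_add, Matrix.kronecker_smul,
    Matrix.one_kronecker_one]
  rfl

lemma EE_eq (d : ℕ) (i j : SA) : EE d i j = EId d i * SRm d j := by
  rw [show EE d i j = Esm d i ⊗ₖ Esm d j from rfl,
    show EId d i = Esm d i ⊗ₖ (1 : Matrix (Conf d 2) (Conf d 2) ℂ) from rfl,
    show SRm d j = (1 : Matrix (Conf d 2) (Conf d 2) ℂ) ⊗ₖ Esm d j from rfl,
    ← Matrix.mul_kronecker_mul, Matrix.mul_one, Matrix.one_mul]

lemma EEexp (d : ℕ) (i j : SA) :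
    EE d i j = (4 : ℂ)⁻¹ •
      (1 + sg i • AAm d + sg j • BBm d + (sg i * sg j) • (AAm d * BBm d)) := by
  rw [EE_eq, EId_eq, SR_eq]
  simp only [smul_mul_assoc, mul_smul_comm, smul_smul, add_mul, mul_add, one_mul, mul_one,
    smul_add]
  module

-- Q sandwiches
lemma qAQ2 {d : ℕ} (hd : (d : ℂ) ≠ 0) : AAm d * Q2 d = BBm d * Q2 d := by
  rw [Q2_eq hd]; simp only [mul_smul_comm, AV2]

lemma qQ2A {d : ℕ} (hd : (d : ℂ) ≠ 0) : Q2 d * AAm d = Q2 d * BBm d := by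
  rw [Q2_eq hd]; simp only [smul_mul_assoc, V2A]

lemma q11 {d : ℕ} (hd : (d : ℂ) ≠ 0) : Q1 d * Q1 d = Q1 d := by
  rw [Q1_eq hd]
  simp only [sub_mul, mul_sub, smul_mul_assoc, mul_smul_comm, smul_smul, smul_sub,
    hV1V1, hV1V2, cV2V1, hV2V2]
  match_scalars <;> field_simp <;> try ring
  all_goals simp [← mul_pow, mul_inv_cancel₀ hd]
  all_goals rw [mul_inv_cancel₀ (pow_ne_zero _ hd)]

lemma q12 {d : ℕ} (hd : (d : ℂ) ≠ 0) : Q1 d * Q2 d = 0 := by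
  rw [Q1_eq hd, Q2_eq hd]
  simp only [sub_mul, mul_sub, smul_mul_assoc, mul_smul_comm, smul_smul, smul_sub,
    hV1V2, hV2V2]
  match_scalars <;> field_simp <;> try ring
  all_goals simp [← mul_pow, mul_inv_cancel₀ hd]
  all_goals rw [mul_inv_cancel₀ (pow_ne_zero _ hd)]

lemma q21 {d : ℕ} (hd : (d : ℂ) ≠ 0) : Q2 d * Q1 d = 0 := by
  rw [Q1_eq hd, Q2_eq hd]
  simp only [sub_mul, mul_sub, smul_mul_assoc, mul_smul_comm, smul_smul, smul_sub,
    cV2V1, hV2V2]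
  match_scalars <;> field_simp <;> try ring
  all_goals simp [← mul_pow, mul_inv_cancel₀ hd]
  all_goals rw [mul_inv_cancel₀ (pow_ne_zero _ hd)]

lemma q22 {d : ℕ} (hd : (d : ℂ) ≠ 0) : Q2 d * Q2 d = Q2 d := by
  rw [Q2_eq hd]
  simp only [smul_mul_assoc, mul_smul_comm, smul_smul, hV2V2]
  match_scalars <;> field_simp <;> try ring
  all_goals simp [← mul_pow, mul_inv_cancel₀ hd]
  all_goals rw [mul_inv_cancel₀ (pow_ne_zero _ hd)]

lemma q1Aq1 {d : ℕ} (hd : (d : ℂ) ≠ 0) : Q1 d * AAm d * Q1 d = (d : ℂ)⁻¹ • Q1 d := by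
  rw [Q1_eq hd]
  simp only [sub_mul, mul_sub, smul_mul_assoc, mul_smul_comm, smul_smul, smul_sub,
    hV1AV1, hV1AV2, cV2AV1, hV2AV2]
  match_scalars <;> field_simp <;> try ring
  all_goals simp [← mul_pow, mul_inv_cancel₀ hd]
  all_goals rw [mul_inv_cancel₀ (pow_ne_zero _ hd)]

lemma q1Bq1 {d : ℕ} (hd : (d : ℂ) ≠ 0) : Q1 d * BBm d * Q1 d = (d : ℂ)⁻¹ • Q1 d := by
  rw [Q1_eq hd]
  simp only [sub_mul, mul_sub, smul_mul_assoc, mul_smul_comm, smul_smul, smul_sub,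
    hV1BV1, cV1BV2, cV2BV1, cV2BV2]
  match_scalars <;> field_simp <;> try ring
  all_goals simp [← mul_pow, mul_inv_cancel₀ hd]
  all_goals rw [mul_inv_cancel₀ (pow_ne_zero _ hd)]

lemma q1ABq1 {d : ℕ} (hd : (d : ℂ) ≠ 0) : Q1 d * (AAm d * BBm d) * Q1 d = 0 := by
  rw [Q1_eq hd]
  simp only [sub_mul, mul_sub, smul_mul_assoc, mul_smul_comm, smul_smul, smul_sub,
    hV1ABV1, cV1ABV2, cV2ABV1, cV2ABV2]
  match_scalars <;> field_simp <;> try ring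
  all_goals simp [← mul_pow, mul_inv_cancel₀ hd]
  all_goals rw [mul_inv_cancel₀ (pow_ne_zero _ hd)]

lemma q1Aq2 {d : ℕ} (hd : (d : ℂ) ≠ 0) : Q1 d * AAm d * Q2 d = 0 := by
  rw [Q1_eq hd, Q2_eq hd]
  simp only [sub_mul, mul_sub, smul_mul_assoc, mul_smul_comm, smul_smul, smul_sub,
    hV1AV2, hV2AV2]
  match_scalars <;> field_simp <;> try ring
  all_goals simp [← mul_pow, mul_inv_cancel₀ hd]
  all_goals rw [mul_inv_cancel₀ (pow_ne_zero _ hd)]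

lemma q1Bq2 {d : ℕ} (hd : (d : ℂ) ≠ 0) : Q1 d * BBm d * Q2 d = 0 := by
  rw [Q1_eq hd, Q2_eq hd]
  simp only [sub_mul, mul_sub, smul_mul_assoc, mul_smul_comm, smul_smul, smul_sub,
    cV1BV2, cV2BV2]
  match_scalars <;> field_simp <;> try ring
  all_goals simp [← mul_pow, mul_inv_cancel₀ hd]
  all_goals rw [mul_inv_cancel₀ (pow_ne_zero _ hd)]

lemma q1ABq2 {d : ℕ} (hd : (d : ℂ) ≠ 0) : Q1 d * (AAm d * BBm d) * Q2 d = 0 := by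
  rw [Q1_eq hd, Q2_eq hd]
  simp only [sub_mul, mul_sub, smul_mul_assoc, mul_smul_comm, smul_smul, smul_sub,
    cV1ABV2, cV2ABV2]
  match_scalars <;> field_simp <;> try ring
  all_goals simp [← mul_pow, mul_inv_cancel₀ hd]
  all_goals rw [mul_inv_cancel₀ (pow_ne_zero _ hd)]

lemma q2Aq1 {d : ℕ} (hd : (d : ℂ) ≠ 0) : Q2 d * AAm d * Q1 d = 0 := by
  rw [Q1_eq hd, Q2_eq hd]
  simp only [sub_mul, mul_sub, smul_mul_assoc, mul_smul_comm, smul_smul, smul_sub,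
    cV2AV1, hV2AV2]
  match_scalars <;> field_simp <;> try ring
  all_goals simp [← mul_pow, mul_inv_cancel₀ hd]
  all_goals rw [mul_inv_cancel₀ (pow_ne_zero _ hd)]

lemma q2Bq1 {d : ℕ} (hd : (d : ℂ) ≠ 0) : Q2 d * BBm d * Q1 d = 0 := by
  rw [Q1_eq hd, Q2_eq hd]
  simp only [sub_mul, mul_sub, smul_mul_assoc, mul_smul_comm, smul_smul, smul_sub,
    cV2BV1, cV2BV2]
  match_scalars <;> field_simp <;> try ring
  all_goals simp [← mul_pow, mul_inv_cancel₀ hd]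
  all_goals rw [mul_inv_cancel₀ (pow_ne_zero _ hd)]

lemma q2ABq1 {d : ℕ} (hd : (d : ℂ) ≠ 0) : Q2 d * (AAm d * BBm d) * Q1 d = 0 := by
  rw [Q1_eq hd, Q2_eq hd]
  simp only [sub_mul, mul_sub, smul_mul_assoc, mul_smul_comm, smul_smul, smul_sub,
    cV2ABV1, cV2ABV2]
  match_scalars <;> field_simp <;> try ring
  all_goals simp [← mul_pow, mul_inv_cancel₀ hd]
  all_goals rw [mul_inv_cancel₀ (pow_ne_zero _ hd)]

lemma q2Aq2 {d : ℕ} (hd : (d : ℂ) ≠ 0) : Q2 d * AAm d * Q2 d = (d : ℂ)⁻¹ • Q2 d := by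
  rw [Q2_eq hd]
  simp only [smul_mul_assoc, mul_smul_comm, smul_smul, hV2AV2]
  match_scalars <;> field_simp <;> try ring
  all_goals simp [← mul_pow, mul_inv_cancel₀ hd]
  all_goals rw [mul_inv_cancel₀ (pow_ne_zero _ hd)]

lemma EId_mul_EId (d : ℕ) (i j : SA) :
    EId d i * EId d j = if i = j then EId d i else 0 := by
  have h := AAAA d
  cases i <;> cases j <;>
    · simp only [EId_eq, sg, reduceCtorEq, reduceIte, if_true, if_false]
      simp only [smul_mul_assoc, mul_smul_comm, smul_smul, add_mul, mul_add, one_mul,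
        mul_one, smul_add, h, neg_smul, one_smul, neg_neg, neg_mul, mul_neg]
      try simp only [smul_neg, neg_add, smul_add, smul_smul]
      module

lemma SR_mul_SR (d : ℕ) (i j : SA) :
    SRm d i * SRm d j = if i = j then SRm d i else 0 := by
  have h := BBBB d
  cases i <;> cases j <;>
    · simp only [SR_eq, sg, reduceCtorEq, reduceIte, if_true, if_false]
      simp only [smul_mul_assoc, mul_smul_comm, smul_smul, add_mul, mul_add, one_mul,
        mul_one, smul_add, h, neg_smul, one_smul, neg_neg, neg_mul, mul_neg]
      try simp only [smul_neg, neg_add, smul_add, smul_smul]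
      module

lemma EIdSR_comm (d : ℕ) (i j : SA) : EId d i * SRm d j = SRm d j * EId d i := by
  rw [EId_eq, SR_eq]
  simp only [smul_mul_assoc, mul_smul_comm, smul_smul, add_mul, mul_add, one_mul, mul_one,
    smul_add, ABBA]
  try simp only [smul_neg, neg_add, smul_add, smul_smul]
  module

lemma EE_mul_EE (d : ℕ) (i j k l : SA) :
    EE d i j * EE d k l = if i = k ∧ j = l then EE d i j else 0 := by
  rw [EE_eq d i j, EE_eq d k l, mul_assoc, ← mul_assoc (SRm d j), ← EIdSR_comm,
    mul_assoc (EId d k), ← mul_assoc, EId_mul_EId, SR_mul_SR]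
  by_cases h1 : i = k <;> by_cases h2 : j = l <;> simp [h1, h2, EE_eq]

lemma EE_mul_EId (d : ℕ) (i j k : SA) :
    EE d i j * EId d k = if i = k then EE d i j else 0 := by
  rw [EE_eq, mul_assoc, ← EIdSR_comm, ← mul_assoc, EId_mul_EId]
  split_ifs <;> simp [EE_eq]

lemma EId_mul_EE (d : ℕ) (k i j : SA) :
    EId d k * EE d i j = if k = i then EE d i j else 0 := by
  rw [EE_eq, ← mul_assoc, EId_mul_EId]
  split_ifs with h <;> simp [EE_eq, h]

lemma S_Q1EEQ1 {d : ℕ} (hd : (d : ℂ) ≠ 0) (k l : SA) :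
    Q1 d * EE d k l * Q1 d = bc d k l • Q1 d := by
  rw [EEexp]
  simp only [mul_add, add_mul, smul_mul_assoc, mul_smul_comm, smul_smul, smul_add,
    mul_one, one_mul]
  simp only [q11 hd, q1Aq1 hd, q1Bq1 hd, q1ABq1 hd]
  cases k <;> cases l <;>
    · simp only [sg, bc, smul_zero, smul_smul]
      match_scalars
      field_simp
      ring

lemma S_Q1EEQ2 {d : ℕ} (hd : (d : ℂ) ≠ 0) (k l : SA) :
    Q1 d * EE d k l * Q2 d = 0 := by
  rw [EEexp]
  simp only [mul_add, add_mul, smul_mul_assoc, mul_smul_comm, smul_smul, smul_add,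
    mul_one, one_mul]
  simp only [q12 hd, q1Aq2 hd, q1Bq2 hd, q1ABq2 hd]
  simp

lemma S_Q2EEQ1 {d : ℕ} (hd : (d : ℂ) ≠ 0) (k l : SA) :
    Q2 d * EE d k l * Q1 d = 0 := by
  rw [EEexp]
  simp only [mul_add, add_mul, smul_mul_assoc, mul_smul_comm, smul_smul, smul_add,
    mul_one, one_mul]
  simp only [q21 hd, q2Aq1 hd, q2Bq1 hd, q2ABq1 hd]
  simp

lemma S_Q2EIdQ2 {d : ℕ} (hd : (d : ℂ) ≠ 0) (k : SA) :
    Q2 d * EId d k * Q2 d = (mC d k / (d : ℂ) ^ 2) • Q2 d := by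
  rw [EId_eq]
  simp only [mul_add, add_mul, smul_mul_assoc, mul_smul_comm, smul_smul, smul_add,
    mul_one, one_mul]
  simp only [q22 hd, q2Aq2 hd]
  cases k <;>
    · simp only [sg, mC, smul_smul]
      match_scalars
      field_simp
      all_goals ring

lemma SRQ2 {d : ℕ} (hd : (d : ℂ) ≠ 0) (j : SA) : SRm d j * Q2 d = EId d j * Q2 d := by
  rw [SR_eq, EId_eq]
  simp only [smul_mul_assoc, add_mul, one_mul]
  rw [← qAQ2 hd]

lemma Q2SR {d : ℕ} (hd : (d : ℂ) ≠ 0) (j : SA) : Q2 d * SRm d j = Q2 d * EId d j := by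
  rw [SR_eq, EId_eq]
  simp only [mul_smul_comm, mul_add, mul_one]
  rw [← qQ2A hd]

lemma S_EEQ2 {d : ℕ} (hd : (d : ℂ) ≠ 0) (i j : SA) :
    EE d i j * Q2 d = if i = j then EId d i * Q2 d else 0 := by
  rw [EE_eq, mul_assoc, SRQ2 hd, ← mul_assoc, EId_mul_EId]
  split_ifs <;> simp

lemma S_Q2EE {d : ℕ} (hd : (d : ℂ) ≠ 0) (i j : SA) :
    Q2 d * EE d i j = if i = j then Q2 d * EId d i else 0 := by
  rw [EE_eq, EIdSR_comm, ← mul_assoc, Q2SR hd, mul_assoc, EId_mul_EId]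
  by_cases h : i = j
  · subst h; simp
  · rw [if_neg (fun hh => h hh.symm), if_neg h, mul_zero]

lemma sum_EE (d : ℕ) : ∑ i : SA, ∑ j : SA, EE d i j = 1 := by
  simp only [sumSA]
  simp only [EEexp, sg]
  module

lemma mul_cont {d : ℕ} {A B R : Op d 2} (h : A * B = R) (Y : Op d 2) :
    A * (B * Y) = R * Y := by rw [← mul_assoc, h]

lemma conj_cont {d : ℕ} {A B C R : Op d 2} (h : A * B * C = R) (Y : Op d 2) :
    A * (B * (C * Y)) = R * Y := by rw [← mul_assoc, ← mul_assoc, h]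

lemma Ghat_mul_Ghat {d : ℕ} (hd : (d : ℂ) ≠ 0) (i j k l p q u v : SA) :
    Ghat1 d i j k l * Ghat1 d p q u v =
      if k = p ∧ l = q then bc d k l • Ghat1 d i j u v else 0 := by
  by_cases h : k = p ∧ l = q
  · obtain ⟨rfl, rfl⟩ := h
    rw [if_pos ⟨rfl, rfl⟩]
    unfold Ghat1
    simp only [mul_assoc]
    have hEE : EE d k l * EE d k l = EE d k l := by simp [EE_mul_EE]
    rw [mul_cont hEE (Q1 d * EE d u v), conj_cont (S_Q1EEQ1 hd k l) (EE d u v)]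
    simp only [smul_mul_assoc, mul_smul_comm]
  · rw [if_neg h]
    unfold Ghat1
    simp only [mul_assoc]
    rw [mul_cont (EE_mul_EE d k l p q) (Q1 d * EE d u v), if_neg h, zero_mul, mul_zero,
      mul_zero]

lemma EQE_mul_EQE {d : ℕ} (hd : (d : ℂ) ≠ 0) (i j k l : SA) :
    (EId d i * Q2 d * EId d j) * (EId d k * Q2 d * EId d l) =
      if j = k then (mC d j / (d : ℂ) ^ 2) • (EId d i * Q2 d * EId d l) else 0 := by
  simp only [mul_assoc]
  rw [mul_cont (EId_mul_EId d j k) (Q2 d * EId d l)]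
  by_cases h : j = k
  · rw [if_pos h, if_pos h, conj_cont (S_Q2EIdQ2 hd j) (EId d l)]
    simp only [smul_mul_assoc, mul_smul_comm]
  · rw [if_neg h, if_neg h, zero_mul, mul_zero, mul_zero]

lemma EQE_mul_Ghat {d : ℕ} (hd : (d : ℂ) ≠ 0) (i j k l u v : SA) :
    (EId d i * Q2 d * EId d j) * Ghat1 d k l u v = 0 := by
  unfold Ghat1
  simp only [mul_assoc]
  rw [mul_cont (EId_mul_EE d j k l) (Q1 d * EE d u v)]
  by_cases h : j = k
  · rw [if_pos h, conj_cont (S_Q2EEQ1 hd k l) (EE d u v), zero_mul, mul_zero]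
  · rw [if_neg h, zero_mul, mul_zero, mul_zero]

lemma Ghat_mul_EQE {d : ℕ} (hd : (d : ℂ) ≠ 0) (k l u v i j : SA) :
    Ghat1 d k l u v * (EId d i * Q2 d * EId d j) = 0 := by
  unfold Ghat1
  simp only [mul_assoc]
  rw [mul_cont (EE_mul_EId d u v i) (Q2 d * EId d j)]
  by_cases h : u = i
  · rw [if_pos h, conj_cont (S_Q1EEQ2 hd u v) (EId d j), zero_mul, mul_zero]
  · rw [if_neg h, zero_mul, mul_zero, mul_zero]

lemma EE_mul_Ghat {d : ℕ} (i j k l u v : SA) :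
    EE d i j * Ghat1 d k l u v = if i = k ∧ j = l then Ghat1 d k l u v else 0 := by
  unfold Ghat1
  simp only [mul_assoc]
  rw [mul_cont (EE_mul_EE d i j k l) (Q1 d * EE d u v)]
  by_cases h : i = k ∧ j = l
  · rw [if_pos h, if_pos h]
    obtain ⟨rfl, rfl⟩ := h
    rfl
  · rw [if_neg h, if_neg h, zero_mul]

lemma Ghat_mul_EE {d : ℕ} (k l u v i j : SA) :
    Ghat1 d k l u v * EE d i j = if u = i ∧ v = j then Ghat1 d k l u v else 0 := by
  unfold Ghat1
  simp only [mul_assoc]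
  rw [EE_mul_EE d u v i j]
  by_cases h : u = i ∧ v = j
  · rw [if_pos h, if_pos h]
  · rw [if_neg h, if_neg h, mul_zero, mul_zero]

lemma EE_mul_EQE {d : ℕ} (hd : (d : ℂ) ≠ 0) (i j k l : SA) :
    EE d i j * (EId d k * Q2 d * EId d l) =
      if i = k ∧ i = j then EId d i * Q2 d * EId d l else 0 := by
  simp only [mul_assoc]
  rw [mul_cont (EE_mul_EId d i j k) (Q2 d * EId d l)]
  by_cases h1 : i = k
  · rw [if_pos h1, mul_cont (S_EEQ2 hd i j) (EId d l)]
    by_cases h2 : i = j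
    · rw [if_pos h2, if_pos ⟨h1, h2⟩, mul_assoc]
    · rw [if_neg h2, if_neg (by tauto : ¬(i = k ∧ i = j)), zero_mul]
  · rw [if_neg h1, if_neg (by tauto : ¬(i = k ∧ i = j)), zero_mul]

lemma EQE_mul_EE {d : ℕ} (hd : (d : ℂ) ≠ 0) (k l i j : SA) :
    (EId d k * Q2 d * EId d l) * EE d i j =
      if l = i ∧ i = j then EId d k * Q2 d * EId d i else 0 := by
  simp only [mul_assoc]
  rw [EId_mul_EE d l i j]
  by_cases h1 : l = i
  · rw [if_pos h1, S_Q2EE hd i j]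
    by_cases h2 : i = j
    · rw [if_pos h2, if_pos ⟨h1, h2⟩]
    · rw [if_neg h2, if_neg (by tauto : ¬(l = i ∧ i = j))]
      simp
  · rw [if_neg h1, if_neg (by tauto : ¬(l = i ∧ i = j)), mul_zero, mul_zero]

lemma bc_ne {d : ℕ} (hd3 : 3 ≤ d) (i j : SA) : bc d i j ≠ 0 := by
  have hd : (d : ℂ) ≠ 0 := hd0 hd3
  have h4d : (4 : ℂ) * (d : ℂ) ≠ 0 := mul_ne_zero (by norm_num) hd
  have hp : ((d : ℂ) + 2) ≠ 0 := by
    have h : ((d : ℂ) + 2) = ((d + 2 : ℕ) : ℂ) := by push_cast; ring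
    rw [h]
    exact Nat.cast_ne_zero.mpr (by omega)
  have hm : ((d : ℂ) - 2) ≠ 0 := by
    have h2 : (d : ℂ) ≠ 2 := by
      intro hc
      have : d = 2 := by exact_mod_cast hc
      omega
    exact sub_ne_zero.mpr h2
  cases i <;> cases j <;> simp only [bc] <;>
    first
    | exact div_ne_zero hp h4d
    | exact div_ne_zero hm h4d
    | norm_num

lemma mC_ne {d : ℕ} (hd3 : 3 ≤ d) (i : SA) : mC d i ≠ 0 := by
  have hd : (d : ℂ) ≠ 0 := hd0 hd3
  have hp : ((d : ℂ) + 1) ≠ 0 := by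
    have h : ((d : ℂ) + 1) = ((d + 1 : ℕ) : ℂ) := by push_cast; ring
    rw [h]
    exact Nat.cast_ne_zero.mpr (by omega)
  have hm : ((d : ℂ) - 1) ≠ 0 := by
    have h1 : (d : ℂ) ≠ 1 := by
      intro hc
      have : d = 1 := by exact_mod_cast hc
      omega
    exact sub_ne_zero.mpr h1
  cases i <;> simp only [mC] <;>
    first
    | exact div_ne_zero (mul_ne_zero hd hp) (by norm_num)
    | exact div_ne_zero (mul_ne_zero hd hm) (by norm_num)

lemma mR_sqrt {d : ℕ} (hd3 : 3 ≤ d) (k : SA) :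
    ((Real.sqrt (mR d k * mR d k) : ℝ) : ℂ) = mC d k := by
  have hd3' : (3 : ℝ) ≤ (d : ℝ) := by exact_mod_cast hd3
  have h0 : 0 ≤ mR d k := by
    cases k
    · simp only [mR]; positivity
    · simp only [mR]
      apply div_nonneg _ (by norm_num)
      apply mul_nonneg (by positivity)
      linarith
  rw [Real.sqrt_mul_self h0]
  cases k <;> simp only [mR, mC] <;> push_cast <;> ring

lemma G2diag {d : ℕ} (hd3 : 3 ≤ d) (k : SA) :
    G2 d k k = ((d : ℂ) ^ 2 / mC d k) • (EId d k * Q2 d * EId d k) := by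
  rw [show G2 d k k = ((d : ℂ) ^ 2 / ((Real.sqrt (mR d k * mR d k) : ℝ) : ℂ)) •
      (EId d k * Q2 d * EId d k) from rfl, mR_sqrt hd3]

lemma G0_eq (d : ℕ) (i j : SA) :
    G0 d i j = EE d i j - (bc d i j)⁻¹ • Ghat1 d i j i j -
      (if i = j then (d : ℂ) ^ 2 / mC d i else 0) • (EId d i * Q2 d * EId d i) := rfl

lemma G2_as_smul (d : ℕ) (k l : SA) :
    G2 d k l = ((d : ℂ) ^ 2 / ((Real.sqrt (mR d k * mR d l) : ℝ) : ℂ)) •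
      (EId d k * Q2 d * EId d l) := rfl

lemma G0_mul_EQE {d : ℕ} (hd3 : 3 ≤ d) (i j k l : SA) :
    G0 d i j * (EId d k * Q2 d * EId d l) = 0 := by
  have hd := hd0 hd3
  have hcc : ((d : ℂ) ^ 2 / mC d i) * (mC d i / (d : ℂ) ^ 2) = 1 := by
    have := mC_ne hd3 i
    field_simp
  rw [G0_eq, sub_mul, sub_mul, smul_mul_assoc, smul_mul_assoc, Ghat_mul_EQE hd,
    EQE_mul_EQE hd, EE_mul_EQE hd, smul_zero]
  by_cases hij : i = j <;> by_cases hik : i = k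
  · rw [if_pos ⟨hik, hij⟩, if_pos hij, if_pos hik, smul_smul, hcc, one_smul, sub_zero,
      sub_self]
  · simp_all
  · simp_all
  · simp_all

lemma EQE_mul_G0 {d : ℕ} (hd3 : 3 ≤ d) (k l i j : SA) :
    (EId d k * Q2 d * EId d l) * G0 d i j = 0 := by
  have hd := hd0 hd3
  rw [G0_eq, mul_sub, mul_sub, mul_smul_comm, mul_smul_comm, EQE_mul_Ghat hd,
    EQE_mul_EE hd, EQE_mul_EQE hd, smul_zero]
  by_cases hij : i = j <;> by_cases hli : l = i
  · have hcc : ((d : ℂ) ^ 2 / mC d i) * (mC d l / (d : ℂ) ^ 2) = 1 := by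
      rw [hli]
      have := mC_ne hd3 i
      field_simp
    rw [if_pos ⟨hli, hij⟩, if_pos hij, if_pos hli, smul_smul, hcc, one_smul, sub_zero,
      sub_self]
  · simp_all
  · simp_all
  · simp_all

lemma G0_mul_Ghat {d : ℕ} (hd3 : 3 ≤ d) (i j k l u v : SA) :
    G0 d i j * Ghat1 d k l u v = 0 := by
  have hd := hd0 hd3
  rw [G0_eq, sub_mul, sub_mul, smul_mul_assoc, smul_mul_assoc, EE_mul_Ghat,
    Ghat_mul_Ghat hd, EQE_mul_Ghat hd, smul_zero, sub_zero]
  by_cases h : i = k ∧ j = l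
  · obtain ⟨rfl, rfl⟩ := h
    rw [if_pos ⟨rfl, rfl⟩, if_pos ⟨rfl, rfl⟩, smul_smul,
      inv_mul_cancel₀ (bc_ne hd3 i j), one_smul, sub_self]
  · rw [if_neg h, if_neg h, smul_zero, sub_zero]

lemma Ghat_mul_G0 {d : ℕ} (hd3 : 3 ≤ d) (k l u v i j : SA) :
    Ghat1 d k l u v * G0 d i j = 0 := by
  have hd := hd0 hd3
  rw [G0_eq, mul_sub, mul_sub, mul_smul_comm, mul_smul_comm, Ghat_mul_EE,
    Ghat_mul_Ghat hd, Ghat_mul_EQE hd, smul_zero, sub_zero]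
  by_cases h : u = i ∧ v = j
  · obtain ⟨rfl, rfl⟩ := h
    rw [if_pos ⟨rfl, rfl⟩, if_pos ⟨rfl, rfl⟩, smul_smul,
      inv_mul_cancel₀ (bc_ne hd3 u v), one_smul, sub_self]
  · rw [if_neg h, if_neg h, smul_zero, sub_zero]

lemma sum_G0 {d : ℕ} (hd3 : 3 ≤ d) :
    (∑ i : SA, ∑ j : SA, G0 d i j) = 1 - G1sum d - G2sum d := by
  have h1 := sum_EE d
  simp only [sumSA] at h1
  rw [show G2sum d = G2 d SA.S SA.S + G2 d SA.A SA.A from rfl, G2diag hd3 SA.S,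
    G2diag hd3 SA.A, show G1sum d = ∑ i : SA, ∑ j : SA, G1 d i j i j from rfl]
  simp only [sumSA, G0_eq,
    show ∀ i j : SA, G1 d i j i j = (bc d i j)⁻¹ • Ghat1 d i j i j from fun _ _ => rfl]
  rw [← h1]
  simp only [reduceCtorEq, reduceIte, if_true, if_false, zero_smul, sub_zero]
  abel

lemma G1sq {d : ℕ} (hd3 : 3 ≤ d) : G1sum d * G1sum d = G1sum d := by
  have hd := hd0 hd3
  have hb : ∀ i j : SA, (bc d i j)⁻¹ • ((bc d i j)⁻¹ • (bc d i j • Ghat1 d i j i j)) =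
      (bc d i j)⁻¹ • Ghat1 d i j i j := by
    intro i j
    rw [smul_smul, smul_smul, mul_assoc, inv_mul_cancel₀ (bc_ne hd3 i j), mul_one]
  rw [show G1sum d = ∑ i : SA, ∑ j : SA, G1 d i j i j from rfl]
  simp only [sumSA,
    show ∀ i j : SA, G1 d i j i j = (bc d i j)⁻¹ • Ghat1 d i j i j from fun _ _ => rfl]
  simp only [add_mul, mul_add, smul_mul_assoc, mul_smul_comm, Ghat_mul_Ghat hd]
  simp only [reduceCtorEq, reduceIte, and_true, true_and, and_false, false_and, and_self,
    if_true, if_false, smul_zero, add_zero, zero_add, hb]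

lemma G2sq {d : ℕ} (hd3 : 3 ≤ d) : G2sum d * G2sum d = G2sum d := by
  have hd := hd0 hd3
  have hm : ∀ k : SA, ((d : ℂ) ^ 2 / mC d k) •
      (((d : ℂ) ^ 2 / mC d k) • ((mC d k / (d : ℂ) ^ 2) • (EId d k * Q2 d * EId d k))) =
      ((d : ℂ) ^ 2 / mC d k) • (EId d k * Q2 d * EId d k) := by
    intro k
    rw [smul_smul, smul_smul]
    congr 1
    have := mC_ne hd3 k
    field_simp
  rw [show G2sum d = G2 d SA.S SA.S + G2 d SA.A SA.A from rfl, G2diag hd3 SA.S,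
    G2diag hd3 SA.A]
  simp only [add_mul, mul_add, smul_mul_assoc, mul_smul_comm, EQE_mul_EQE hd]
  simp only [reduceCtorEq, reduceIte, if_true, if_false, smul_zero, add_zero, zero_add, hm]

lemma G1G2 {d : ℕ} (hd3 : 3 ≤ d) : G1sum d * G2sum d = 0 := by
  have hd := hd0 hd3
  rw [show G2sum d = G2 d SA.S SA.S + G2 d SA.A SA.A from rfl, G2diag hd3 SA.S,
    G2diag hd3 SA.A, show G1sum d = ∑ i : SA, ∑ j : SA, G1 d i j i j from rfl]
  simp only [sumSA,
    show ∀ i j : SA, G1 d i j i j = (bc d i j)⁻¹ • Ghat1 d i j i j from fun _ _ => rfl]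
  simp only [add_mul, mul_add, smul_mul_assoc, mul_smul_comm, Ghat_mul_EQE hd, smul_zero,
    add_zero]

lemma G2G1 {d : ℕ} (hd3 : 3 ≤ d) : G2sum d * G1sum d = 0 := by
  have hd := hd0 hd3
  rw [show G2sum d = G2 d SA.S SA.S + G2 d SA.A SA.A from rfl, G2diag hd3 SA.S,
    G2diag hd3 SA.A, show G1sum d = ∑ i : SA, ∑ j : SA, G1 d i j i j from rfl]
  simp only [sumSA,
    show ∀ i j : SA, G1 d i j i j = (bc d i j)⁻¹ • Ghat1 d i j i j from fun _ _ => rfl]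
  simp only [add_mul, mul_add, smul_mul_assoc, mul_smul_comm, EQE_mul_Ghat hd, smul_zero,
    add_zero]

lemma Nidem {d : ℕ} (hd3 : 3 ≤ d) :
    (1 - G1sum d - G2sum d) * (1 - G1sum d - G2sum d) = 1 - G1sum d - G2sum d := by
  simp only [sub_mul, mul_sub, one_mul, mul_one, G1sq hd3, G2sq hd3, G1G2 hd3, G2G1 hd3,
    sub_zero]
  abel

/-- for `d ≥ 3` the three families give mutually orthogonal ideals summing
to the identity: `Σ_{ij} G^(0)_{ij} = 1 - G^(1) - G^(2)` (an idempotent), and all cross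
products between the `G^(0)`, `Ĝ^(1)` and `G^(2)` families vanish. -/
theorem ideals_resolution (d : ℕ) (hd : 3 ≤ d) :
    (∑ i : SA, ∑ j : SA, G0 d i j) = 1 - G1sum d - G2sum d ∧
    (1 - G1sum d - G2sum d) * (1 - G1sum d - G2sum d) = 1 - G1sum d - G2sum d ∧
    (∀ i j k l : SA, G0 d i j * G2 d k l = 0 ∧ G2 d k l * G0 d i j = 0) ∧
    (∀ i j k l u v : SA,
      G0 d i j * Ghat1 d k l u v = 0 ∧ Ghat1 d k l u v * G0 d i j = 0) ∧
    (∀ i j k l u v : SA,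
      G2 d i j * Ghat1 d k l u v = 0 ∧ Ghat1 d k l u v * G2 d i j = 0) := by
  refine ⟨sum_G0 hd, Nidem hd, ?_, ?_, ?_⟩
  · intro i j k l
    constructor
    · rw [G2_as_smul, mul_smul_comm, G0_mul_EQE hd, smul_zero]
    · rw [G2_as_smul, smul_mul_assoc, EQE_mul_G0 hd, smul_zero]
  · intro i j k l u v
    exact ⟨G0_mul_Ghat hd i j k l u v, Ghat_mul_G0 hd k l u v i j⟩
  · intro i j k l u v
    constructor
    · rw [G2_as_smul, smul_mul_assoc, EQE_mul_Ghat (hd0 hd) i j k l u v, smul_zero]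
    · rw [G2_as_smul, mul_smul_comm, Ghat_mul_EQE (hd0 hd) k l u v i j, smul_zero]

end WBA
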